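/- arXiv:1603.06506 — 4 statements merged into one kernel-verified Lean document; each statement's English description precedes it below -/
import Mathlib

section
/- Let k be a field and A a finite-dimensional k-algebra in which every finite-dimensional projective A-module is injective. Let V be a finite-dimensional A-module, N a simple A-module, and φ : rad(V) → N a nonzero A-module homomorphism. Then φ does not factor through any projective A-module; that is, there exist no finite-dimensional projective A-module P and A-homomorphisms a : rad(V) → P and b : P → N with φ = b ∘ a. -/
/-- The radical `rad(M) = J(A)·M` of a module `M` over a ring `A`,
where `J(A)` is the Jacobson radical of `A`. -/
def moduleRadical (A : Type) [Ring A] (M : Type) [AddCommGroup M] [Module A M] :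
    Submodule A M :=
  (Ideal.jacobson (⊥ : Ideal A)) • (⊤ : Submodule A M)

/-- Over a finite-dimensional `k`-algebra `A` in which every
finite-dimensional projective module is injective, a nonzero homomorphism
`φ : rad(V) → N` with `N` simple cannot factor through a projective module. -/
theorem stmt0
    (k : Type) [Field k] (A : Type) [Ring A] [Algebra k A] [FiniteDimensional k A]
    (hFrobenius : ∀ P : ModuleCat.{0} A, Module.Finite A P →
      Module.Projective A P → Module.Injective A P)
    (V : Type) [AddCommGroup V] [Module A V] [Module k V] [IsScalarTower k A V]
    [FiniteDimensional k V]
    (N : Type) [AddCommGroup N] [Module A N] [Module k N] [IsScalarTower k A N]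
    [FiniteDimensional k N]
    (hN : IsSimpleModule A N)
    (φ : ↥(moduleRadical A V) →ₗ[A] N) (hφ : φ ≠ 0) :
    ¬ ∃ P : ModuleCat.{0} A, Module.Finite A P ∧ Module.Projective A P ∧
      ∃ (a : ↥(moduleRadical A V) →ₗ[A] P) (b : ↥P →ₗ[A] N), φ = b ∘ₗ a := by
  rintro ⟨P, hfin, hproj, a, b, hab⟩
  have hinj := hFrobenius P hfin hproj
  obtain ⟨h, hh⟩ := hinj.out (moduleRadical A V).subtype
    (Submodule.injective_subtype _) a
  -- rad(N) = 0 since N is simple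
  haveI := hN
  have hann : ∀ r ∈ Ideal.jacobson (⊥ : Ideal A), ∀ n : N, r • n = 0 := by
    intro r hr n
    by_cases hn : n = 0
    · simp [hn]
    · have hmax := IsSimpleModule.ker_toSpanSingleton_isMaximal A (M := N) hn
      have hle : Ideal.jacobson (⊥ : Ideal A) ≤
          LinearMap.ker (LinearMap.toSpanSingleton A N n) :=
        sInf_le ⟨bot_le, hmax⟩
      simpa using hle hr
  have hradN : moduleRadical A N = ⊥ := by
    rw [eq_bot_iff]
    show (Ideal.jacobson (⊥ : Ideal A)) • (⊤ : Submodule A N) ≤ ⊥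
    exact Submodule.smul_le.2 fun r hr n _ => by simp [hann r hr n]
  have key : ∀ x : ↥(moduleRadical A V), (b ∘ₗ h) x.val ∈ moduleRadical A N := by
    intro x
    have hx : x.val ∈ moduleRadical A V := x.2
    have hmap : (moduleRadical A V).map (b ∘ₗ h) ≤ moduleRadical A N := by
      calc (moduleRadical A V).map (b ∘ₗ h)
          = (Ideal.jacobson (⊥ : Ideal A)) • (⊤ : Submodule A V).map (b ∘ₗ h) :=
            Submodule.map_smul'' _ _ _
        _ ≤ (Ideal.jacobson (⊥ : Ideal A)) • (⊤ : Submodule A N) :=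
            smul_mono_right _ le_top
    exact hmap (Submodule.mem_map_of_mem hx)
  apply hφ
  ext x
  have : φ x = (b ∘ₗ h) x.val := by
    rw [hab]; exact congrArg b (hh x).symm
  rw [this]
  have := key x
  rw [hradN] at this
  simpa using this
end

section
/- Let k be a field and A a finite-dimensional k-algebra in which every finite-dimensional projective A-module is injective. Let P be a finite-dimensional projective A-module, W a submodule of rad(P) (as is the case for every syzygy Ω^n V, n ≥ 1, in a minimal projective resolution of a module V), N a simple A-module, and φ : W → N a nonzero A-module homomorphism. Then φ does not factor through any projective A-module. -/
/-- Over a finite-dimensional `k`-algebra `A` in which every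
finite-dimensional projective module is injective, if `P₀` is a finite-dimensional
projective module, `W ⊆ rad(P₀)` a submodule (as is the case for syzygies `Ω^n V`,
`n ≥ 1`), `N` simple, then a nonzero homomorphism `φ : W → N` cannot factor
through a projective module. -/
theorem stmt1
    (k : Type) [Field k] (A : Type) [Ring A] [Algebra k A] [FiniteDimensional k A]
    (hFrobenius : ∀ P : ModuleCat.{0} A, Module.Finite A P →
      Module.Projective A P → Module.Injective A P)
    (P₀ : Type) [AddCommGroup P₀] [Module A P₀] [Module k P₀] [IsScalarTower k A P₀]
    [FiniteDimensional k P₀]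
    (hP₀ : Module.Projective A P₀)
    (W : Submodule A P₀) (hW : W ≤ moduleRadical A P₀)
    (N : Type) [AddCommGroup N] [Module A N] [Module k N] [IsScalarTower k A N]
    [FiniteDimensional k N]
    (hN : IsSimpleModule A N)
    (φ : ↥W →ₗ[A] N) (hφ : φ ≠ 0) :
    ¬ ∃ P : ModuleCat.{0} A, Module.Projective A P ∧
      ∃ (a : ↥W →ₗ[A] P) (b : ↥P →ₗ[A] N), φ = b ∘ₗ a := by
  classical
  rintro ⟨P, hPproj, a, b, rfl⟩
  -- Step 1: the Jacobson radical annihilates the simple module N.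
  have hJN : ∀ r ∈ Ideal.jacobson (⊥ : Ideal A), ∀ n : N, r • n = 0 := by
    intro r hr n
    rcases eq_or_ne n 0 with rfl | hn
    · simp
    · have hmax := IsSimpleModule.ker_toSpanSingleton_isMaximal A hn
      have hle : Ideal.jacobson (⊥ : Ideal A) ≤
          LinearMap.ker (LinearMap.toSpanSingleton A N n) :=
        sInf_le ⟨bot_le, hmax⟩
      simpa using hle hr
  have hradN : moduleRadical A N = ⊥ := by
    rw [moduleRadical, eq_bot_iff]
    refine Submodule.smul_le.2 fun r hr n _ => ?_
    exact (Submodule.mem_bot A).mpr (hJN r hr n)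
  -- Step 2: factor through a finitely generated free module.
  obtain ⟨s, hs⟩ := hPproj.out
  set v : ↥W →ₗ[A] (↥P →₀ A) := s ∘ₗ a with hv
  haveI : IsNoetherian A P₀ := isNoetherian_of_tower k inferInstance
  have hWfg : W.FG := IsNoetherian.noetherian W
  have hrange : (LinearMap.range v).FG := by
    rw [LinearMap.range_eq_map]
    exact Submodule.FG.map _ ((Submodule.fg_top W).mpr hWfg)
  obtain ⟨G, hG⟩ := hrange
  set S : Finset ↥P := G.sup Finsupp.support with hS
  have hsupp : LinearMap.range v ≤ Finsupp.supported A A (↑S : Set ↥P) := by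
    rw [← hG, Submodule.span_le]
    intro g hg
    rw [SetLike.mem_coe, Finsupp.mem_supported]
    exact Finset.coe_subset.mpr (Finset.le_sup (f := Finsupp.support) (Finset.mem_coe.mp hg))
  let e := Finsupp.supportedEquivFinsupp (M := A) (R := A) (↑S : Set ↥P)
  let a' : ↥W →ₗ[A] ((↑S : Set ↥P) →₀ A) :=
    e.toLinearMap ∘ₗ (v.codRestrict (Finsupp.supported A A (↑S : Set ↥P))
      fun w => hsupp (LinearMap.mem_range_self v w))
  let b' : ((↑S : Set ↥P) →₀ A) →ₗ[A] N :=
    b ∘ₗ (Finsupp.linearCombination A id) ∘ₗ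
      (Finsupp.supported A A (↑S : Set ↥P)).subtype ∘ₗ e.symm.toLinearMap
  have hfac : ∀ w, b (a w) = b' (a' w) := by
    intro w
    simp only [a', b', LinearMap.comp_apply, LinearEquiv.coe_coe,
      LinearEquiv.symm_apply_apply, Submodule.coe_subtype, LinearMap.codRestrict_apply]
    rw [hv]
    simp only [LinearMap.comp_apply]
    rw [hs (a w)]
  -- Step 3: the finite free module is injective, so a' extends to P₀.
  have hfin : Module.Finite A ((↑S : Set ↥P) →₀ A) := inferInstance
  have hproj : Module.Projective A ((↑S : Set ↥P) →₀ A) := inferInstance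
  have hInj : Module.Injective A ((↑S : Set ↥P) →₀ A) :=
    hFrobenius (ModuleCat.of A ((↑S : Set ↥P) →₀ A)) hfin hproj
  obtain ⟨h, hh⟩ := hInj.out W.subtype W.injective_subtype a'
  set ψ : P₀ →ₗ[A] N := b' ∘ₗ h with hψdef
  have hψ : ∀ x ∈ moduleRadical A P₀, ψ x = 0 := by
    intro x hx
    have h1 : ψ x ∈ Submodule.map ψ (moduleRadical A P₀) := Submodule.mem_map_of_mem hx
    rw [moduleRadical, Submodule.map_smul''] at h1
    have h2 : ψ x ∈ moduleRadical A N := Submodule.smul_mono (le_refl _) le_top h1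
    rw [hradN] at h2
    simpa using h2
  apply hφ
  ext w
  have h3 : (b ∘ₗ a) w = ψ ↑w := by
    simp only [LinearMap.comp_apply, hψdef]
    rw [hfac w]
    congr 1
    exact (hh w).symm
  rw [LinearMap.zero_apply, h3]
  exact hψ ↑w (hW w.2)
end

section
/- Let k be a field and A a finite-dimensional k-algebra in which every finite-dimensional injective A-module is projective and every finite-dimensional projective A-module is injective. Let Q be a finite-dimensional injective A-module, U a submodule of Q containing the socle soc(Q) (as is the case for every cosyzygy Ω^{-n} V, n ≥ 1, arising from a minimal injective resolution of a module V), N a simple A-module, and φ : N → Q/U a nonzero A-module homomorphism. Then φ does not factor through any projective A-module. -/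
/-- The socle of a module: the sum of all its simple submodules. -/
def moduleSocle (A : Type) [Ring A] (M : Type) [AddCommGroup M] [Module A M] :
    Submodule A M :=
  sSup {S : Submodule A M | IsSimpleModule A ↥S}

/-- Over a finite-dimensional `k`-algebra `A` in which every
finite-dimensional injective module is projective and vice versa, if `Q` is a
finite-dimensional injective module, `U` a submodule with `soc(Q) ⊆ U` (as is the
case for cosyzygies `Ω^{-n} V`, `n ≥ 1`), and `N` simple, then a nonzero
homomorphism `φ : N → Q/U` cannot factor through a projective module. -/
theorem stmt2
    (k : Type) [Field k] (A : Type) [Ring A] [Algebra k A] [FiniteDimensional k A]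
    (hInjProj : ∀ P : ModuleCat.{0} A, Module.Finite A P →
      Module.Injective A P → Module.Projective A P)
    (hProjInj : ∀ P : ModuleCat.{0} A, Module.Finite A P →
      Module.Projective A P → Module.Injective A P)
    (Q : Type) [AddCommGroup Q] [Module A Q] [Module k Q] [IsScalarTower k A Q]
    [FiniteDimensional k Q]
    (hQ : Module.Injective A Q)
    (U : Submodule A Q) (hU : moduleSocle A Q ≤ U)
    (N : Type) [AddCommGroup N] [Module A N] [Module k N] [IsScalarTower k A N]
    [FiniteDimensional k N]
    (hN : IsSimpleModule A N)
    (φ : N →ₗ[A] Q ⧸ U) (hφ : φ ≠ 0) :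
    ¬ ∃ P : ModuleCat.{0} A, Module.Projective A P ∧
      ∃ (a : N →ₗ[A] P) (b : ↥P →ₗ[A] Q ⧸ U), φ = b ∘ₗ a := by
  rintro ⟨P, hP, a, b, hfac⟩
  obtain ⟨b', hb'⟩ := Module.projective_lifting_property U.mkQ b U.mkQ_surjective
  set ψ : N →ₗ[A] Q := b' ∘ₗ a with hψ
  have hcomp : U.mkQ ∘ₗ ψ = φ := by
    rw [hψ, ← LinearMap.comp_assoc, hb', hfac]
  have hψne : ψ ≠ 0 := by
    rintro h; apply hφ; rw [← hcomp, h, LinearMap.comp_zero]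
  have hker : LinearMap.ker ψ = ⊥ := by
    rcases hN.1.2 (LinearMap.ker ψ) with h | h
    · exact h
    · exact absurd (LinearMap.ker_eq_top.mp h) hψne
  have hinj : Function.Injective ψ := LinearMap.ker_eq_bot.mp hker
  have hsimple : IsSimpleModule A ↥(LinearMap.range ψ) :=
    IsSimpleModule.congr (LinearEquiv.ofInjective ψ hinj).symm
  have hle : LinearMap.range ψ ≤ U :=
    le_trans (le_sSup hsimple) hU
  apply hφ
  ext x
  rw [← hcomp]
  simp only [LinearMap.comp_apply, LinearMap.zero_apply, Submodule.mkQ_apply,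
    Submodule.Quotient.mk_eq_zero]
  exact hle ⟨x, rfl⟩
end

section
/- Let k be a field, A a finite-dimensional k-algebra, W a finite-dimensional A-module, and N a simple A-module with projective cover π_N : P_N → N. If φ : W → N is a nonzero A-module homomorphism that factors through some projective A-module (i.e. φ = b ∘ a with a : W → P, b : P → N, P projective), then W has a direct summand isomorphic to P_N: there is a split surjection W → P_N. -/
/-- The radical is contained in every maximal submodule. -/
lemma moduleRadical_le_coatom {A : Type} [Ring A] {M : Type} [AddCommGroup M] [Module A M]
    {m : Submodule A M} (hm : IsCoatom m) : moduleRadical A M ≤ m := by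
  have hsimple : IsSimpleModule A (M ⧸ m) := isSimpleModule_iff_isCoatom.mpr hm
  refine Submodule.smul_le.2 fun r hr n _ => ?_
  have : m.mkQ (r • n) = 0 := by
    rw [map_smul]
    by_cases h0 : m.mkQ n = 0
    · rw [h0, smul_zero]
    · have hmax := IsSimpleModule.ker_toSpanSingleton_isMaximal A (M := M ⧸ m) h0
      have hle : Ideal.jacobson (⊥ : Ideal A) ≤
          LinearMap.ker (LinearMap.toSpanSingleton A (M ⧸ m) (m.mkQ n)) :=
        sInf_le ⟨bot_le, hmax⟩
      exact hle hr
  rwa [← Submodule.Quotient.mk_eq_zero, ← Submodule.mkQ_apply]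

/-- Let `N` be simple with projective cover `π_N : P_N → N`.
If `φ : W → N` is a nonzero homomorphism factoring through some projective
module, then `W` has a direct summand isomorphic to `P_N`: there is a split
surjection `W → P_N`. -/
theorem stmt12
    (k : Type) [Field k] (A : Type) [Ring A] [Algebra k A] [FiniteDimensional k A]
    (N : Type) [AddCommGroup N] [Module A N] [Module k N] [IsScalarTower k A N]
    [FiniteDimensional k N]
    (hN : IsSimpleModule A N)
    (PN : Type) [AddCommGroup PN] [Module A PN] [Module k PN] [IsScalarTower k A PN]
    [FiniteDimensional k PN]
    (hPN : Module.Projective A PN)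
    (πN : PN →ₗ[A] N) (hπN : Function.Surjective πN)
    (hkerN : LinearMap.ker πN ≤ moduleRadical A PN)
    (W : Type) [AddCommGroup W] [Module A W] [Module k W] [IsScalarTower k A W]
    [FiniteDimensional k W]
    (φ : W →ₗ[A] N) (hφ : φ ≠ 0)
    (hfactor : ∃ P : ModuleCat.{0} A, Module.Projective A P ∧
      ∃ (a : W →ₗ[A] P) (b : ↥P →ₗ[A] N), φ = b ∘ₗ a) :
    ∃ (ρ : W →ₗ[A] PN) (σ : PN →ₗ[A] W), ρ ∘ₗ σ = LinearMap.id := by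
  obtain ⟨P, hP, a, b, hab⟩ := hfactor
  -- lift b through the projective cover
  obtain ⟨c, hc⟩ := Module.projective_lifting_property πN b hπN
  set ρ : W →ₗ[A] PN := c ∘ₗ a with hρdef
  have hπρ : πN ∘ₗ ρ = φ := by
    rw [hρdef, ← LinearMap.comp_assoc, hc, hab]
  -- φ is surjective since N is simple
  have hφsurj : Function.Surjective φ := by
    have : LinearMap.range φ = ⊤ := by
      rcases hN.1.2 (LinearMap.range φ) with h | h
      · exfalso; apply hφ; ext w
        have : φ w ∈ LinearMap.range φ := ⟨w, rfl⟩
        rw [h] at this; simpa using this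
      · exact h
    exact LinearMap.range_eq_top.1 this
  -- range ρ ⊔ ker πN = ⊤
  have hsup : LinearMap.range ρ ⊔ LinearMap.ker πN = ⊤ := by
    rw [eq_top_iff]
    intro x _
    obtain ⟨w, hw⟩ := hφsurj (πN x)
    have hx : x - ρ w ∈ LinearMap.ker πN := by
      simp only [LinearMap.mem_ker, map_sub]
      rw [← hπρ] at hw
      simp only [LinearMap.comp_apply] at hw
      rw [hw, sub_self]
    have : x = ρ w + (x - ρ w) := by abel
    rw [this]
    exact Submodule.add_mem_sup ⟨w, rfl⟩ hx
  -- PN is a finite A-module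
  have hfin : Module.Finite A PN := Module.Finite.of_restrictScalars_finite k A PN
  -- Nakayama: ρ is surjective
  have hρsurj : Function.Surjective ρ := by
    rw [← LinearMap.range_eq_top]
    have hle : (⊤ : Submodule A PN) ≤ LinearMap.range ρ ⊔
        (Ideal.jacobson (⊥ : Ideal A)) • (⊤ : Submodule A PN) := by
      calc (⊤ : Submodule A PN) = LinearMap.range ρ ⊔ LinearMap.ker πN := hsup.symm
        _ ≤ LinearMap.range ρ ⊔ moduleRadical A PN := sup_le_sup_left hkerN _
        _ = _ := rfl
    have hfg : (⊤ : Submodule A PN).FG := Module.finite_def.mp hfin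
    have hcoatomic : IsCoatomic (Submodule A PN) :=
      CompleteLattice.coatomic_of_top_compact ((Submodule.fg_iff_compact ⊤).mp hfg)
    rcases hcoatomic.eq_top_or_exists_le_coatom (LinearMap.range ρ) with h | ⟨m, hm, hlem⟩
    · exact h
    · exfalso
      apply hm.1
      rw [eq_top_iff]
      calc (⊤ : Submodule A PN) ≤ LinearMap.range ρ ⊔ moduleRadical A PN := hle
        _ ≤ m ⊔ m := sup_le_sup hlem (moduleRadical_le_coatom hm)
        _ = m := sup_idem m
  -- split using projectivity of PN
  obtain ⟨σ, hσ⟩ := Module.projective_lifting_property ρ LinearMap.id hρsurj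
  exact ⟨ρ, σ, hσ⟩
end
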